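/- arXiv:1612.05025 — 3 statements merged into one kernel-verified Lean document; each statement's English description precedes it below -/
import Mathlib

section
/- (Berman–Higman) Let G be a finite group and u a torsion unit of the integral group ring ℤG with augmentation 1 and u ≠ 1. Then the coefficient of the identity element in u is zero. -/
open Polynomial Matrix

section BHaux

set_option linter.unusedSectionVars false

variable {G : Type*} [Group G] [Fintype G] [DecidableEq G]

noncomputable def BHbasis : Module.Basis G ℂ (MonoidAlgebra ℂ G) := MonoidAlgebra.basis G ℂ

noncomputable def BHpsi : MonoidAlgebra ℤ G →ₐ[ℤ] MonoidAlgebra ℂ G :=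
  MonoidAlgebra.lift ℤ (MonoidAlgebra ℂ G) G (MonoidAlgebra.of ℂ G)

lemma BHpsi_apply (f : MonoidAlgebra ℤ G) (g : G) : (BHpsi f).coeff g = (f.coeff g : ℂ) := by
  induction f using MonoidAlgebra.induction_linear with
  | zero => simp
  | add p q hp hq => rw [map_add, MonoidAlgebra.coeff_add, MonoidAlgebra.coeff_add, Finsupp.add_apply, Finsupp.add_apply, hp, hq, Int.cast_add]
  | single a b =>
    rw [BHpsi, MonoidAlgebra.lift_single, MonoidAlgebra.of_apply]
    rw [show (b • MonoidAlgebra.single a (1:ℂ) : MonoidAlgebra ℂ G)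
        = MonoidAlgebra.single a ((b : ℂ)) by
      rw [MonoidAlgebra.smul_single]; norm_num]
    simp only [MonoidAlgebra.coeff_single, Finsupp.single_apply]
    split_ifs <;> simp

noncomputable def BHPhi : MonoidAlgebra ℤ G →+* Matrix G G ℂ :=
  ((LinearMap.toMatrixAlgEquiv (BHbasis (G := G))).toRingHom).comp
    (((Algebra.lmul ℂ (MonoidAlgebra ℂ G)).toRingHom).comp BHpsi.toRingHom)

lemma BHPhi_apply (f : MonoidAlgebra ℤ G) (g h : G) : BHPhi f g h = (f.coeff (g * h⁻¹) : ℂ) := by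
  have h1 : BHPhi f = LinearMap.toMatrixAlgEquiv (BHbasis (G:=G))
      (LinearMap.mul ℂ (MonoidAlgebra ℂ G) (BHpsi f)) := rfl
  rw [h1, LinearMap.toMatrixAlgEquiv_apply]
  have h2 : (BHbasis (G:=G)) h = MonoidAlgebra.single h 1 :=
    MonoidAlgebra.basis_apply ℂ h
  have h3 : ∀ x : MonoidAlgebra ℂ G, (BHbasis (G:=G)).repr x g = x.coeff g := fun x => rfl
  rw [h2, h3, LinearMap.mul_apply', MonoidAlgebra.coeff_mul_single_apply, mul_one, BHpsi_apply]

lemma BHroot_pow_eq_one {n : ℕ} (A : Matrix G G ℂ) (hA : A ^ n = 1) {μ : ℂ}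
    (hμ : μ ∈ A.charpoly.roots) : μ ^ n = 1 := by
  have hroot : A.charpoly.IsRoot μ := (Polynomial.mem_roots
    (A.charpoly_monic.ne_zero)).mp hμ
  have heval : A.charpoly.eval μ = (Matrix.scalar G μ - A).det := by
    rw [Matrix.charpoly, eval_det, matPolyEquiv_charmatrix]
    simp
  have hdet : (Matrix.scalar G μ - A).det = 0 := by rw [← heval]; exact hroot
  obtain ⟨x, hx0, hxv⟩ := (Matrix.exists_mulVec_eq_zero_iff).mpr hdet
  have hscal : (Matrix.scalar G μ).mulVec x = μ • x := by
    rw [show Matrix.scalar G μ = μ • (1 : Matrix G G ℂ) by simp [Matrix.scalar_apply,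
      Matrix.smul_one_eq_diagonal]]
    rw [Matrix.smul_mulVec, Matrix.one_mulVec]
  have hAx : A.mulVec x = μ • x := by
    rw [Matrix.sub_mulVec, hscal] at hxv
    have := sub_eq_zero.mp hxv
    rw [← this]
  have key : ∀ k : ℕ, (A ^ k).mulVec x = μ ^ k • x := by
    intro k
    induction k with
    | zero => simp [Matrix.one_mulVec]
    | succ k ih =>
      rw [pow_succ, ← Matrix.mulVec_mulVec, hAx, Matrix.mulVec_smul, ih,
        smul_smul, pow_succ, mul_comm]
  have hx1 : x = μ ^ n • x := by rw [← key, hA, Matrix.one_mulVec]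
  have : (μ ^ n - 1) • x = 0 := by rw [sub_smul, one_smul, ← hx1, sub_self]
  rcases smul_eq_zero.mp this with h | h
  · exact sub_eq_zero.mp h
  · exact absurd h hx0

end BHaux
lemma BHreal_pow {x : ℝ} (hx : 0 ≤ x) {n : ℕ} (hn : n ≠ 0) (h : x ^ n = 1) : x = 1 := by
  rcases lt_trichotomy x 1 with h1 | h1 | h1
  · have := pow_lt_one₀ hx h1 hn
    rw [h] at this; exact absurd this (lt_irrefl 1)
  · exact h1
  · have := one_lt_pow₀ h1 hn
    rw [h] at this; exact absurd this (lt_irrefl 1)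

lemma BHcomplex_eq_one {z : ℂ} (h1 : ‖z‖ = 1) (h2 : z.re = 1) : z = 1 := by
  have hsq : Complex.normSq z = 1 := by
    rw [← Complex.sq_norm, h1, one_pow]
  rw [Complex.normSq_apply, h2] at hsq
  have him : z.im = 0 := by nlinarith [sq_nonneg z.im]
  exact Complex.ext h2 him

lemma BHmultiset (s : Multiset ℝ) (h1 : ∀ x ∈ s, x ≤ 1)
    (h2 : (Multiset.card s : ℝ) ≤ s.sum) : ∀ x ∈ s, x = 1 := by
  induction s using Multiset.induction_on with
  | empty => simp
  | cons a s ih =>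
    have hs : s.sum ≤ (Multiset.card s : ℝ) := by
      simpa using Multiset.sum_le_card_nsmul s 1 fun x hx => h1 x (Multiset.mem_cons_of_mem hx)
    have ha1 : a ≤ 1 := h1 a (Multiset.mem_cons_self a s)
    have hsum : (Multiset.card s : ℝ) + 1 ≤ a + s.sum := by
      have := h2
      rw [Multiset.card_cons, Multiset.sum_cons] at this
      push_cast at this
      linarith
    have ha : a = 1 := le_antisymm ha1 (by linarith)
    intro x hx
    rcases Multiset.mem_cons.mp hx with rfl | hx
    · exact ha
    · exact ih (fun y hy => h1 y (Multiset.mem_cons_of_mem hy)) (by linarith) x hx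

/-- Berman–Higman -/
theorem stmt_5 {G : Type*} [Group G] [Fintype G]
    (u : (MonoidAlgebra ℤ G)ˣ) (hfin : IsOfFinOrder u)
    (haug : ∑ g : G, (u : MonoidAlgebra ℤ G).coeff g = 1)
    (hne : u ≠ 1) :
    (u : MonoidAlgebra ℤ G).coeff 1 = 0 := by
  classical
  haveI : Nonempty G := ⟨1⟩
  by_contra ha0
  set n := orderOf u with hndef
  have hn : n ≠ 0 := hfin.orderOf_pos.ne'
  set a : ℤ := (u : MonoidAlgebra ℤ G).coeff 1 with hadef
  set A : Matrix G G ℂ := BHPhi (u : MonoidAlgebra ℤ G) with hAdef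
  have hAgh : ∀ g h : G, A g h = ((u : MonoidAlgebra ℤ G).coeff (g * h⁻¹) : ℂ) :=
    fun g h => BHPhi_apply _ g h
  have hApow : A ^ n = 1 := by
    have huv : ((u : MonoidAlgebra ℤ G)) ^ n = 1 := by
      rw [← Units.val_pow_eq_pow_val, pow_orderOf_eq_one u, Units.val_one]
    rw [hAdef, ← map_pow, huv]
    exact _root_.map_one BHPhi
  -- trace computation
  have htr : A.trace = (Fintype.card G : ℂ) * (a : ℂ) := by
    have : A.trace = ∑ g : G, A g g := by rfl
    rw [this]
    have : ∀ g : G, A g g = (a : ℂ) := by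
      intro g
      rw [hAgh g g, mul_inv_cancel]
    rw [Finset.sum_congr rfl fun g _ => this g, Finset.sum_const, Finset.card_univ,
      nsmul_eq_mul]
  -- roots of the characteristic polynomial
  set S := A.charpoly.roots with hSdef
  have hsplits : A.charpoly.Splits := IsAlgClosed.splits A.charpoly
  have hcard : Multiset.card S = Fintype.card G := by
    rw [hSdef, Polynomial.splits_iff_card_roots.mp hsplits, Matrix.charpoly_natDegree_eq_dim]
  have hsum : S.sum = A.trace := (Matrix.trace_eq_sum_roots_charpoly A).symm
  have hnorm1 : ∀ μ ∈ S, ‖μ‖ = 1 := by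
    intro μ hμ
    have h1 := BHroot_pow_eq_one A hApow hμ
    have h2 : ‖μ‖ ^ n = 1 := by rw [← norm_pow, h1, norm_one]
    exact BHreal_pow (norm_nonneg μ) hn h2
  have hmapnorm : (S.map fun μ => ‖μ‖).sum = (Fintype.card G : ℝ) := by
    rw [Multiset.map_congr rfl fun μ hμ => hnorm1 μ hμ, Multiset.map_const',
      Multiset.sum_replicate, hcard]
    simp
  -- |a| ≤ 1
  have hcardpos : (0 : ℝ) < Fintype.card G := by
    exact_mod_cast Fintype.card_pos
  have habs1 : |a| = 1 := by
    have h1 : ‖A.trace‖ ≤ (S.map fun μ => ‖μ‖).sum := by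
      rw [← hsum]; exact norm_multiset_sum_le S
    have h3 : ‖A.trace‖ = (Fintype.card G : ℝ) * |(a : ℝ)| := by
      rw [htr, norm_mul, Complex.norm_natCast, Complex.norm_intCast]
    rw [h3, hmapnorm] at h1
    have h4 : |(a : ℝ)| ≤ 1 := by
      nlinarith
    have h5 : |a| ≤ 1 := by exact_mod_cast (by rwa [← Int.cast_abs] at h4 : ((|a| : ℤ) : ℝ) ≤ 1)
    have h6 : a ≠ 0 := ha0
    exact le_antisymm h5 (Int.one_le_abs h6)
  have hcases : a = 1 ∨ a = -1 := (abs_eq (by norm_num : (0:ℤ) ≤ 1)).mp habs1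
  set ε : ℂ := (a : ℂ) with hεdef
  have hε2 : ε * ε = 1 := by
    rcases hcases with h | h <;> rw [hεdef, h] <;> norm_num
  have hεnorm : ‖ε‖ = 1 := by
    rw [hεdef, Complex.norm_intCast]
    exact_mod_cast congrArg (fun z : ℤ => (z : ℝ)) habs1
  -- all roots are equal to ε
  have hSsum : ε * S.sum = (Fintype.card G : ℂ) := by
    rw [hsum, htr, ← mul_assoc, mul_comm ε, mul_assoc, hε2, mul_one]
  have hre : (S.map fun μ => (ε * μ).re).sum = (Fintype.card G : ℝ) := by
    have h1 : (S.map fun μ => ε * μ).sum = ε * S.sum := by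
      have h0 := Multiset.sum_map_mul_left (s := S) (f := fun μ => μ) (a := ε)
      rw [Multiset.map_id'] at h0
      exact h0
    have h2 : ((S.map fun μ => ε * μ).map Complex.re).sum = ((S.map fun μ => ε * μ).sum).re := by
      exact (map_multiset_sum Complex.reAddGroupHom _).symm
    rw [Multiset.map_map] at h2
    rw [show ((fun z : ℂ => z.re) ∘ fun μ => ε * μ) = fun μ => (ε * μ).re from rfl] at h2
    rw [h2, h1, hSsum]
    simp
  have hterm : ∀ μ ∈ S, (ε * μ).re = 1 := by
    intro μ hμ
    have := BHmultiset (S.map fun μ => (ε * μ).re) ?_ ?_ ((ε * μ).re)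
      (Multiset.mem_map_of_mem _ hμ)
    · exact this
    · intro x hx
      obtain ⟨ν, hν, rfl⟩ := Multiset.mem_map.mp hx
      calc (ε * ν).re ≤ ‖ε * ν‖ := Complex.re_le_norm _
        _ = 1 := by rw [norm_mul, hεnorm, hnorm1 ν hν, mul_one]
    · rw [hre, Multiset.card_map, hcard]
  have hroots : ∀ μ ∈ S, μ = ε := by
    intro μ hμ
    have h1 : ε * μ = 1 := by
      apply BHcomplex_eq_one
      · rw [norm_mul, hεnorm, hnorm1 μ hμ, mul_one]
      · exact hterm μ hμ
    calc μ = (ε * ε) * μ := by rw [hε2, one_mul]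
      _ = ε * (ε * μ) := by ring
      _ = ε := by rw [h1, mul_one]
  have hSrep : S = Multiset.replicate (Fintype.card G) ε :=
    Multiset.eq_replicate.mpr ⟨hcard, fun b hb => hroots b hb⟩
  -- charpoly = (X - C ε) ^ card G
  have hcp : A.charpoly = (X - C ε) ^ Fintype.card G := by
    rw [hsplits.eq_prod_roots_of_monic A.charpoly_monic, ← hSdef,
      hSrep, Multiset.map_replicate, Multiset.prod_replicate]
  -- minimal polynomial
  set m := minpoly ℂ A with hmdef
  have hdvd1 : m ∣ X ^ n - 1 := by
    apply minpoly.dvd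
    rw [map_sub, map_pow, aeval_X, _root_.map_one, hApow, sub_self]
  have hsep : (X ^ n - 1 : ℂ[X]).Separable := by
    have := Polynomial.separable_X_pow_sub_C (1 : ℂ)
      (by exact_mod_cast (Nat.cast_ne_zero (R := ℂ)).mpr hn) one_ne_zero
    rwa [Polynomial.C_1] at this
  have hmsep : m.Separable := hsep.of_dvd hdvd1
  have hdvd2 : m ∣ (X - C ε) ^ Fintype.card G := hcp ▸ A.minpoly_dvd_charpoly
  obtain ⟨i, hi, hass⟩ := (dvd_prime_pow (prime_X_sub_C ε) _).mp hdvd2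
  have hint : IsIntegral ℂ A := Matrix.isIntegral A
  have hi0 : i ≠ 0 := by
    rintro rfl
    rw [pow_zero] at hass
    have hu : IsUnit (minpoly ℂ A) := associated_one_iff_isUnit.mp hass
    have hpos := minpoly.natDegree_pos hint
    rw [(minpoly.monic hint).eq_one_of_isUnit hu] at hpos
    simp at hpos
  have hi1 : i = 1 := by
    have hsep2 : ((X - C ε) ^ i).Separable := hmsep.of_dvd hass.symm.dvd
    exact (Polynomial.Separable.of_pow (Polynomial.not_isUnit_X_sub_C ε) hi0 hsep2).2
  rw [hi1, pow_one] at hass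
  have hm : m = X - C ε :=
    Polynomial.eq_of_monic_of_associated (minpoly.monic hint) (Polynomial.monic_X_sub_C ε) hass
  -- A is scalar
  have hAscalar : A = Matrix.diagonal fun _ : G => ε := by
    have h0 := minpoly.aeval ℂ A
    rw [← hmdef, hm, map_sub, aeval_X, aeval_C, sub_eq_zero] at h0
    rw [h0, Matrix.algebraMap_eq_diagonal]
    rfl
  -- read off coefficients
  have hcoeff : ∀ g : G, g ≠ 1 → (u : MonoidAlgebra ℤ G).coeff g = 0 := by
    intro g hg
    have h1 : A g 1 = ((u : MonoidAlgebra ℤ G).coeff g : ℂ) := by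
      rw [hAgh g 1]; simp
    rw [hAscalar, Matrix.diagonal_apply_ne _ hg] at h1
    exact_mod_cast h1.symm
  have hsum1 : ∑ g : G, (u : MonoidAlgebra ℤ G).coeff g = a := by
    rw [Finset.sum_eq_single 1 (fun g _ hg => hcoeff g hg) (fun h => absurd (Finset.mem_univ 1) h)]
  have ha1 : a = 1 := by rw [← hsum1, haug]
  -- u = 1, contradiction
  apply hne
  ext1
  rw [Units.val_one]
  rw [MonoidAlgebra.one_def]
  ext g
  rw [MonoidAlgebra.coeff_single]
  by_cases hg : g = 1
  · subst hg
    rw [Finsupp.single_eq_same]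
    exact_mod_cast ha1
  · rw [Finsupp.single_eq_of_ne hg]
    exact hcoeff g hg
end

section
/- Let G be a finite group and u ∈ ℤG. Then the image of u^q in the quotient ℤG/([ℤG,ℤG] + qℤG) depends only on the image of u; equivalently, if u ≡ v mod [ℤG,ℤG] + qℤG, then u^q ≡ v^q mod [ℤG,ℤG] + qℤG, for any prime q. -/
set_option linter.unusedSectionVars false

open Finset

namespace FreshKey

variable {R : Type*} [Ring R]

/-- pick `x` or `y` according to a boolean. -/
def bc (x y : R) (b : Bool) : R := bif b then x else y

/-- the word associated to `f : Fin n → Bool`. -/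
def wordV (x y : R) {n : ℕ} (f : Fin n → Bool) : R :=
  ((List.finRange n).map (fun i => bc x y (f i))).prod

lemma wordV_cons (x y : R) {n : ℕ} (b : Bool) (f : Fin n → Bool) :
    wordV x y (Fin.cons b f) = bc x y b * wordV x y f := by
  simp [wordV, List.finRange_succ, List.map_map, Function.comp_def]

lemma expand (x y : R) (n : ℕ) :
    (x + y) ^ n = ∑ f : Fin n → Bool, wordV x y f := by
  induction n with
  | zero => simp [wordV]
  | succ n ih =>
    rw [pow_succ', ih, Finset.mul_sum]
    rw [← Equiv.sum_comp (Fin.consEquiv (fun _ : Fin (n+1) => Bool)) (fun f => wordV x y f)]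
    rw [Fintype.sum_prod_type, Fintype.sum_bool]
    have : ∀ b : Bool, ∑ f : Fin n → Bool, wordV x y (Fin.cons b f)
        = bc x y b * ∑ f : Fin n → Bool, wordV x y f := by
      intro b; rw [Finset.mul_sum]; exact Finset.sum_congr rfl fun f _ => wordV_cons x y b f
    show (∑ i : Fin n → Bool, (x + y) * wordV x y i) = ∑ f : Fin n → Bool, wordV x y (Fin.cons true f) + ∑ f : Fin n → Bool, wordV x y (Fin.cons false f)
    rw [this true, this false]
    simp [bc, add_mul, Finset.sum_add_distrib, Finset.mul_sum]

section ZModPart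

variable (q : ℕ) [NeZero q]

/-- words indexed by `ZMod q`. -/
def zw (x y : R) (w : ZMod q → Bool) : R :=
  ((List.range q).map (fun i : ℕ => bc x y (w ((i : ℕ) : ZMod q)))).prod

def eFZ : Fin q ≃ ZMod q where
  toFun i := ((i : ℕ) : ZMod q)
  invFun k := ⟨k.val, ZMod.val_lt _⟩
  left_inv i := by ext; simp [ZMod.val_cast_of_lt i.isLt]
  right_inv k := ZMod.natCast_rightInverse k

lemma zw_eq_wordV (x y : R) (w : ZMod q → Bool) :
    zw q x y w = wordV x y (fun i : Fin q => w (((i : ℕ) : ZMod q))) := by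
  unfold zw wordV
  congr 1
  apply List.ext_getElem (by simp)
  intro n h1 h2
  simp

lemma sum_zw (x y : R) : ∑ w : ZMod q → Bool, zw q x y w = (x + y) ^ q := by
  rw [expand]
  apply Fintype.sum_equiv ((Equiv.arrowCongr (eFZ q) (Equiv.refl Bool)).symm)
  intro w
  rw [zw_eq_wordV]
  rfl

def shift (k : ZMod q) (w : ZMod q → Bool) : ZMod q → Bool := fun i => w (i + k)

lemma shift_zero (w : ZMod q → Bool) : shift q 0 w = w := by
  funext i; simp [shift]

lemma shift_shift (a b : ZMod q) (w : ZMod q → Bool) :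
    shift q a (shift q b w) = shift q (a + b) w := by
  funext i; simp [shift, add_assoc]


lemma zw_shift_one (x y : R) (w : ZMod q → Bool) :
    ∃ a b : R, zw q x y w = a * b ∧ zw q x y (shift q 1 w) = b * a := by
  obtain ⟨m, rfl⟩ : ∃ m, q = m + 1 := ⟨q - 1, (Nat.succ_pred_eq_of_pos (NeZero.pos q)).symm⟩
  refine ⟨bc x y (w 0),
    ((List.range m).map (fun i : ℕ => bc x y (w (((i + 1 : ℕ)) : ZMod (m+1))))).prod, ?_, ?_⟩
  · unfold zw
    rw [List.range_succ_eq_map, List.map_cons, List.prod_cons, List.map_map]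
    simp [Function.comp_def]
  · unfold zw shift
    rw [List.range_succ, List.map_append, List.prod_append, List.map_singleton,
      List.prod_singleton]
    have h0 : ((m : ℕ) : ZMod (m+1)) + 1 = 0 := by
      have : (((m+1 : ℕ)) : ZMod (m+1)) = 0 := by simp
      push_cast at this
      exact this
    congr 1
    · apply congrArg List.prod
      apply List.map_congr_left
      intro i _
      congr 1
      push_cast
      ring
    · rw [h0]

variable {T : AddSubgroup R}

lemma zw_shift_one_mem (hcomm : ∀ a b : R, a * b - b * a ∈ T) (x y : R) (w : ZMod q → Bool) :
    zw q x y (shift q 1 w) - zw q x y w ∈ T := by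
  obtain ⟨a, b, h1, h2⟩ := zw_shift_one q x y w
  rw [h1, h2]
  exact hcomm b a

lemma zw_shift_mem (hcomm : ∀ a b : R, a * b - b * a ∈ T) (x y : R) (k : ZMod q)
    (w : ZMod q → Bool) : zw q x y (shift q k w) - zw q x y w ∈ T := by
  have key : ∀ n : ℕ, zw q x y (shift q (n : ZMod q) w) - zw q x y w ∈ T := by
    intro n
    induction n with
    | zero =>
      rw [Nat.cast_zero, shift_zero, sub_self]
      exact T.zero_mem
    | succ n ih =>
      have hs : shift q ((n + 1 : ℕ) : ZMod q) w = shift q 1 (shift q (n : ZMod q) w) := by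
        rw [shift_shift]
        congr 1
        push_cast
        ring
      rw [hs]
      have h2 := zw_shift_one_mem q hcomm x y (shift q (n : ZMod q) w)
      have h3 := T.add_mem h2 ih
      simpa using h3
  have hk : k = ((k.val : ℕ) : ZMod q) := (ZMod.natCast_rightInverse k).symm
  rw [hk]
  exact key k.val

def IsConst (w : ZMod q → Bool) : Prop := ∀ i, w i = w 0

lemma isConst_of_shift_eq [Fact q.Prime] {w : ZMod q → Bool} {d : ZMod q} (hd : d ≠ 0)
    (h : shift q d w = w) : IsConst q w := by
  have hstep : ∀ i, w (i + d) = w i := fun i => congrFun h i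
  have step : ∀ n : ℕ, ∀ i, w (i + n • d) = w i := by
    intro n
    induction n with
    | zero => simp
    | succ n ih =>
      intro i
      have he : i + (n + 1) • d = (i + d) + n • d := by
        rw [succ_nsmul]; ring
      rw [he, ih (i + d), hstep i]
  intro i
  have hn : ((i * d⁻¹).val : ZMod q) = i * d⁻¹ := ZMod.natCast_rightInverse _
  have h2 : (0 : ZMod q) + (i * d⁻¹).val • d = i := by
    rw [nsmul_eq_mul, hn, zero_add, mul_assoc, inv_mul_cancel₀ hd, mul_one]
  calc w i = w ((0 : ZMod q) + (i * d⁻¹).val • d) := by rw [h2]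
    _ = w 0 := step _ 0

lemma not_isConst_shift {w : ZMod q → Bool} (hw : ¬ IsConst q w) (k : ZMod q) :
    ¬ IsConst q (shift q k w) := by
  intro hc
  apply hw
  have h1 : ∀ i, w (i + k) = w (0 + k) := hc
  intro i
  have h2 := h1 (i - k)
  rw [sub_add_cancel] at h2
  rw [h2, ← h1 (-k)]
  simp

noncomputable def orb (w : ZMod q → Bool) : Finset (ZMod q → Bool) :=
  letI := Classical.decEq (ZMod q → Bool)
  Finset.image (fun k => shift q k w) Finset.univ

lemma mem_orb_iff {u w : ZMod q → Bool} : u ∈ orb q w ↔ ∃ k, shift q k w = u := by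
  letI := Classical.decEq (ZMod q → Bool)
  simp [orb]

lemma mem_orb_self (w : ZMod q → Bool) : w ∈ orb q w :=
  (mem_orb_iff q).2 ⟨0, shift_zero q w⟩

lemma orb_shift (k : ZMod q) (w : ZMod q → Bool) : orb q (shift q k w) = orb q w := by
  ext u
  rw [mem_orb_iff, mem_orb_iff]
  constructor
  · rintro ⟨j, rfl⟩
    exact ⟨j + k, (shift_shift q j k w).symm⟩
  · rintro ⟨j, rfl⟩
    refine ⟨j - k, ?_⟩
    rw [shift_shift, sub_add_cancel]

lemma orb_eq_of_mem {u w : ZMod q → Bool} (h : u ∈ orb q w) : orb q u = orb q w := by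
  obtain ⟨k, rfl⟩ := (mem_orb_iff q).1 h
  exact orb_shift q k w

lemma card_orb [Fact q.Prime] {w : ZMod q → Bool} (hw : ¬ IsConst q w) :
    (orb q w).card = q := by
  letI := Classical.decEq (ZMod q → Bool)
  have hinj : Function.Injective (fun k => shift q k w) := by
    intro a b hab
    have hab' : shift q a w = shift q b w := hab
    by_contra hne
    apply hw
    apply isConst_of_shift_eq q (d := a - b) (sub_ne_zero.2 hne)
    funext i
    show w (i + (a - b)) = w i
    have h2 : w (i - b + a) = w (i - b + b) := congrFun hab' (i - b)
    calc w (i + (a - b)) = w (i - b + a) := by congr 1; ring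
      _ = w (i - b + b) := h2
      _ = w i := by rw [sub_add_cancel]
  rw [orb, Finset.card_image_of_injective _ hinj, Finset.card_univ, ZMod.card]


lemma orbit_sum_mem [Fact q.Prime] (hcomm : ∀ a b : R, a * b - b * a ∈ T)
    (hqT : ∀ r : R, q • r ∈ T) (x y : R) {w : ZMod q → Bool} (hw : ¬ IsConst q w) :
    ∑ u ∈ orb q w, zw q x y u ∈ T := by
  have hsplit : ∑ u ∈ orb q w, zw q x y u
      = (∑ u ∈ orb q w, (zw q x y u - zw q x y w)) + (orb q w).card • zw q x y w := by
    rw [Finset.sum_sub_distrib, Finset.sum_const]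
    abel
  rw [hsplit, card_orb q hw]
  refine T.add_mem (AddSubgroup.sum_mem T fun u hu => ?_) (hqT _)
  obtain ⟨k, rfl⟩ := (mem_orb_iff q).1 hu
  exact zw_shift_mem q hcomm x y k w

lemma nonconst_sum_mem [Fact q.Prime] (hcomm : ∀ a b : R, a * b - b * a ∈ T)
    (hqT : ∀ r : R, q • r ∈ T) (x y : R) (s : Finset (ZMod q → Bool))
    (hs : ∀ w, w ∈ s ↔ ¬ IsConst q w) :
    ∑ w ∈ s, zw q x y w ∈ T := by
  classical
  rw [← Finset.sum_fiberwise_of_maps_to (g := orb q) (t := s.image (orb q))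
    (fun w hw => Finset.mem_image_of_mem _ hw) (zw q x y)]
  refine AddSubgroup.sum_mem T fun o ho => ?_
  obtain ⟨w₀, hw₀s, rfl⟩ := Finset.mem_image.1 ho
  have hw₀ : ¬ IsConst q w₀ := (hs w₀).1 hw₀s
  have hset : s.filter (fun u => orb q u = orb q w₀) = orb q w₀ := by
    ext u
    simp only [Finset.mem_filter, hs]
    constructor
    · rintro ⟨_, h2⟩
      rw [← h2]
      exact mem_orb_self q u
    · intro hu
      obtain ⟨k, rfl⟩ := (mem_orb_iff q).1 hu
      exact ⟨not_isConst_shift q hw₀ k, orb_shift q k w₀⟩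
  rw [hset]
  exact orbit_sum_mem q hcomm hqT x y hw₀

lemma zw_const (x y : R) (b : Bool) : zw q x y (fun _ => b) = (bc x y b) ^ q := by
  unfold zw
  rw [List.map_const', List.prod_replicate, List.length_range]

theorem freshman [Fact q.Prime] (hcomm : ∀ a b : R, a * b - b * a ∈ T)
    (hqT : ∀ r : R, q • r ∈ T) (x y : R) :
    (x + y) ^ q - x ^ q - y ^ q ∈ T := by
  classical
  rw [← sum_zw q x y,
    ← Finset.sum_filter_add_sum_filter_not Finset.univ (fun w => IsConst q w) (zw q x y)]
  have hconst : Finset.univ.filter (fun w => IsConst q w)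
      = ({fun _ => true, fun _ => false} : Finset (ZMod q → Bool)) := by
    ext w
    simp only [Finset.mem_filter, Finset.mem_univ, true_and, Finset.mem_insert,
      Finset.mem_singleton]
    constructor
    · intro h
      cases hb : w 0 with
      | true => left; funext i; rw [h i, hb]
      | false => right; funext i; rw [h i, hb]
    · rintro (rfl | rfl) <;> exact fun i => rfl
  have hne : (fun _ => true : ZMod q → Bool) ≠ (fun _ => false) := by
    intro h
    simpa using congrFun h 0
  rw [hconst, Finset.sum_pair hne, zw_const, zw_const]
  have hmem := nonconst_sum_mem q hcomm hqT x y
    (Finset.univ.filter (fun w => ¬ IsConst q w)) (by intro w; simp)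
  have : bc x y true ^ q + bc x y false ^ q
        + ∑ w ∈ Finset.univ.filter (fun w => ¬ IsConst q w), zw q x y w
        - x ^ q - y ^ q
      = ∑ w ∈ Finset.univ.filter (fun w => ¬ IsConst q w), zw q x y w := by
    show x ^ q + y ^ q + _ - x ^ q - y ^ q = _
    abel
  rw [this]
  exact hmem

end ZModPart

end FreshKey

/-- The additive subgroup `[ℤG, ℤG]` generated by additive commutators `x*y - y*x`. -/
noncomputable def addCommutatorSubgroup (G : Type*) [Group G] : AddSubgroup (MonoidAlgebra ℤ G) :=
  AddSubgroup.closure {z | ∃ x y : MonoidAlgebra ℤ G, z = x * y - y * x}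

/-- The additive subgroup `qℤG` of multiples of `q`. -/
noncomputable def qMultiples (G : Type*) [Group G] (q : ℕ) : AddSubgroup (MonoidAlgebra ℤ G) :=
  AddSubgroup.closure {z | ∃ w : MonoidAlgebra ℤ G, z = q • w}

namespace FreshKey

variable {G : Type*} [Group G] (q : ℕ)

/-- the `ℤ`-linear map sending `g ↦ g ^ q`. -/
noncomputable def psi : MonoidAlgebra ℤ G →+ MonoidAlgebra ℤ G :=
  (MonoidAlgebra.mapDomainLinearMap ℤ ℤ (fun g : G => g ^ q)).toAddMonoidHom

lemma psi_single (g : G) (a : ℤ) :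
    psi q (MonoidAlgebra.single g a) = MonoidAlgebra.single (g ^ q) a :=
  MonoidAlgebra.mapDomainLinearMap_single _ _ _

lemma hcommT : ∀ x y : MonoidAlgebra ℤ G,
    x * y - y * x ∈ addCommutatorSubgroup G ⊔ qMultiples G q := fun x y =>
  AddSubgroup.mem_sup_left (AddSubgroup.subset_closure ⟨x, y, rfl⟩)

lemma hqT : ∀ w : MonoidAlgebra ℤ G, q • w ∈ addCommutatorSubgroup G ⊔ qMultiples G q := fun w =>
  AddSubgroup.mem_sup_right (AddSubgroup.subset_closure ⟨w, rfl⟩)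

lemma conj_single_mem (s g : G) (c : ℤ) :
    MonoidAlgebra.single (g⁻¹ * s * g) c - MonoidAlgebra.single s c
      ∈ addCommutatorSubgroup G ⊔ qMultiples G q := by
  have h1 : MonoidAlgebra.single (g⁻¹ : G) (1 : ℤ) * MonoidAlgebra.single (s * g) c
      = MonoidAlgebra.single (g⁻¹ * (s * g)) c := by
    rw [MonoidAlgebra.single_mul_single, one_mul]
  have h2 : MonoidAlgebra.single (s * g) c * MonoidAlgebra.single (g⁻¹ : G) (1 : ℤ)
      = MonoidAlgebra.single s c := by
    rw [MonoidAlgebra.single_mul_single, mul_one, mul_assoc, mul_inv_cancel, mul_one]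
  have := hcommT q (MonoidAlgebra.single (g⁻¹ : G) (1 : ℤ)) (MonoidAlgebra.single (s * g) c)
  rw [h1, h2, ← mul_assoc] at this
  exact this

lemma comm_add_left (y f g : MonoidAlgebra ℤ G) :
    (f + g) * y - y * (f + g) = (f * y - y * f) + (g * y - y * g) := by
  rw [add_mul, mul_add]; abel

lemma comm_add_right (x f g : MonoidAlgebra ℤ G) :
    x * (f + g) - (f + g) * x = (x * f - f * x) + (x * g - g * x) := by
  rw [add_mul, mul_add]; abel

lemma psi_commutator_mem (x y : MonoidAlgebra ℤ G) :
    psi q (x * y - y * x) ∈ addCommutatorSubgroup G ⊔ qMultiples G q := by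
  set T := addCommutatorSubgroup G ⊔ qMultiples G q with hT
  induction x using MonoidAlgebra.induction_linear with
  | zero => simpa using T.zero_mem
  | add f g hf hg =>
    rw [comm_add_left y f g, map_add]
    exact T.add_mem hf hg
  | single g a =>
    induction y using MonoidAlgebra.induction_linear with
    | zero => simpa using T.zero_mem
    | add f₁ f₂ h1 h2 =>
      rw [comm_add_right (MonoidAlgebra.single g a) f₁ f₂, map_add]
      exact T.add_mem h1 h2
    | single h b =>
      rw [MonoidAlgebra.single_mul_single, MonoidAlgebra.single_mul_single, map_sub,
        psi_single, psi_single, mul_comm b a]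
      have hconj : (h * g) ^ q = g⁻¹ * ((g * h) ^ q) * g := by
        have he : h * g = g⁻¹ * (g * h) * (g⁻¹)⁻¹ := by group
        rw [he, conj_pow, inv_inv]
      rw [hconj]
      have hm := T.neg_mem (conj_single_mem q ((g * h) ^ q) g (a * b))
      rw [neg_sub] at hm
      exact hm

lemma psi_mem_of_mem {t : MonoidAlgebra ℤ G}
    (ht : t ∈ addCommutatorSubgroup G ⊔ qMultiples G q) :
    psi q t ∈ addCommutatorSubgroup G ⊔ qMultiples G q := by
  set T := addCommutatorSubgroup G ⊔ qMultiples G q with hT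
  have hle : addCommutatorSubgroup G ⊔ qMultiples G q ≤ T.comap (psi (G := G) q) := by
    apply sup_le
    · rw [addCommutatorSubgroup]
      apply (AddSubgroup.closure_le _).2
      rintro z ⟨x, y, rfl⟩
      exact psi_commutator_mem q x y
    · rw [qMultiples]
      apply (AddSubgroup.closure_le _).2
      rintro z ⟨w, rfl⟩
      have h1 : psi q (q • w) = q • psi q w := map_nsmul _ _ _
      exact SetLike.mem_coe.2 (AddSubgroup.mem_comap.2 (by rw [h1]; exact hqT q (psi q w)))
  exact hle ht

lemma single_pow_sub_psi_mem (hq : q.Prime) (g : G) (a : ℤ) :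
    MonoidAlgebra.single g a ^ q - psi q (MonoidAlgebra.single g a)
      ∈ addCommutatorSubgroup G ⊔ qMultiples G q := by
  haveI : Fact q.Prime := ⟨hq⟩
  have hdvd : (q : ℤ) ∣ a ^ q - a := by
    rw [← ZMod.intCast_zmod_eq_zero_iff_dvd]
    push_cast
    rw [ZMod.pow_card, sub_self]
  obtain ⟨c, hc⟩ := hdvd
  rw [MonoidAlgebra.single_pow, psi_single]
  have key : MonoidAlgebra.single (g ^ q) (a ^ q) - MonoidAlgebra.single (g ^ q) a
      = q • MonoidAlgebra.single (g ^ q) c := by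
    rw [← MonoidAlgebra.single_sub, hc, MonoidAlgebra.smul_single]
    congr 1
  rw [key]
  exact hqT q _

lemma pow_sub_psi_mem (hq : q.Prime) (u : MonoidAlgebra ℤ G) :
    u ^ q - psi q u ∈ addCommutatorSubgroup G ⊔ qMultiples G q := by
  haveI : Fact q.Prime := ⟨hq⟩
  haveI : NeZero q := ⟨hq.ne_zero⟩
  set T := addCommutatorSubgroup G ⊔ qMultiples G q with hT
  have habc : ∀ P F G2 p1 p2 : MonoidAlgebra ℤ G,
      P - F - G2 + (F - p1) + (G2 - p2) = P - (p1 + p2) := by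
    intros; abel
  refine MonoidAlgebra.induction_linear
    (motive := fun u : MonoidAlgebra ℤ G => u ^ q - psi q u ∈ T) u ?_ ?_ ?_
  · simpa [zero_pow hq.ne_zero] using T.zero_mem
  · intro f g hf hg
    have hkey := freshman q (T := T) (hcommT q) (hqT q) f g
    have hsum := T.add_mem (T.add_mem hkey hf) hg
    rw [habc] at hsum
    rw [show psi q (f + g) = psi q f + psi q g from map_add _ _ _]
    exact hsum
  · intro g a
    exact single_pow_sub_psi_mem q hq g a

end FreshKey

theorem stmt_7 {G : Type*} [Group G] [Fintype G] (q : ℕ) (hq : q.Prime)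
    (u v : MonoidAlgebra ℤ G)
    (h : u - v ∈ addCommutatorSubgroup G ⊔ qMultiples G q) :
    u ^ q - v ^ q ∈ addCommutatorSubgroup G ⊔ qMultiples G q := by
  set T := addCommutatorSubgroup G ⊔ qMultiples G q with hT
  have h1 := FreshKey.pow_sub_psi_mem q hq u
  have h2 := FreshKey.pow_sub_psi_mem q hq v
  have h3 : FreshKey.psi q (u - v) ∈ T := FreshKey.psi_mem_of_mem q h
  have he : u ^ q - v ^ q
      = (u ^ q - FreshKey.psi q u) - (v ^ q - FreshKey.psi q v) + FreshKey.psi q (u - v) := by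
    rw [map_sub]
    abel
  rw [he]
  exact T.add_mem (T.sub_mem h1 h2) h3
end

section
/- Let q be a prime and G a finite group. For u = Σ a_g g ∈ ℤG with Σ_{g a q-element, g≠1 allowed} a_g = s, the coefficient-sum over q-elements of u^q, taken modulo q, equals s modulo q; i.e., writing u^q = Σ β_g g, we have Σ_{g q-element} β_g ≡ Σ_{g q-element} a_g (mod q). -/
open scoped Classical
open Finset
open Fin.NatCast Fin.CommRing

-- combinatorial key lemma
lemma sum_modEq_fixed {X : Type*} [Fintype X] {q : ℕ} (hq : q.Prime) (e : Equiv.Perm X)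
    (he : e ^ q = 1) (F : X → ℤ) (hF : ∀ x, F (e x) = F x)
    (s : Finset X) (hs : ∀ x, x ∈ s ↔ e x = x) :
    (∑ x, F x) ≡ (∑ x ∈ s, F x) [ZMOD (q : ℤ)] := by
  have hsf : s = Finset.univ.filter (fun x => e x = x) := by
    ext x
    simp [hs x]
  rw [hsf]
  -- F invariant under powers
  have hFn : ∀ (n : ℕ) (x : X), F ((e ^ n) x) = F x := by
    intro n
    induction n with
    | zero => simp
    | succ n ih =>
      intro x
      rw [pow_succ, Equiv.Perm.mul_apply, ih (e x), hF]
  have hfixn : ∀ {x : X}, e x = x → ∀ (n : ℕ), (e ^ n) x = x :=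
    fun h n => Function.IsFixedPt.perm_pow h n
  have hfix_of_pow : ∀ {d : ℕ}, ¬ q ∣ d → ∀ {x : X}, (e ^ d) x = x → e x = x := by
    intro d hnd x hd
    have hco : Nat.Coprime q d := (Nat.Prime.coprime_iff_not_dvd hq).2 hnd
    have hb : (1 : ℤ) = q * Nat.gcdA q d + d * Nat.gcdB q d := by
      have h := Nat.gcd_eq_gcd_ab q d
      rw [hco] at h
      exact_mod_cast h
    have h2 : (e ^ ((q : ℤ) * Nat.gcdA q d + (d : ℤ) * Nat.gcdB q d)) x = x := by
      rw [zpow_add, Equiv.Perm.mul_apply, zpow_mul, zpow_mul]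
      rw [zpow_natCast e d]
      have hdfix : (((e ^ d : Equiv.Perm X)) ^ (Nat.gcdB q d)) x = x :=
        Function.IsFixedPt.perm_zpow hd _
      rw [hdfix]
      rw [zpow_natCast e q, he, one_zpow, Equiv.Perm.one_apply]
    calc e x = (e ^ (1 : ℤ)) x := by rw [zpow_one]
      _ = x := by rw [hb]; exact h2
  -- orbits
  set Φ : X → Finset X := fun x => Finset.image (fun j : Fin q => (e ^ (j : ℕ)) x) Finset.univ with hΦdef
  have memΦ : ∀ {x y : X}, y ∈ Φ x ↔ ∃ n : ℕ, (e ^ n) x = y := by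
    intro x y
    constructor
    · intro h
      rcases Finset.mem_image.mp h with ⟨j, -, rfl⟩
      exact ⟨(j : ℕ), rfl⟩
    · rintro ⟨n, rfl⟩
      have hord : orderOf e ∣ q := orderOf_dvd_of_pow_eq_one he
      have hmod : e ^ (n % q) = e ^ n :=
        pow_eq_pow_iff_modEq.mpr (Nat.ModEq.of_dvd hord (Nat.mod_modEq n q))
      exact Finset.mem_image.mpr ⟨⟨n % q, Nat.mod_lt n hq.pos⟩, Finset.mem_univ _, by
        simp only [Fin.val_mk]; rw [hmod]⟩
  have Φ_self : ∀ x : X, x ∈ Φ x := fun x => memΦ.mpr ⟨0, by simp⟩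
  have Φ_symm : ∀ {x y : X}, y ∈ Φ x → x ∈ Φ y := by
    intro x y h
    rcases memΦ.mp h with ⟨n, rfl⟩
    refine memΦ.mpr ⟨n * (q - 1), ?_⟩
    rw [← Equiv.Perm.mul_apply, ← pow_add]
    obtain ⟨m, hm⟩ : ∃ m, q = m + 1 := ⟨q - 1, (Nat.succ_pred_eq_of_pos hq.pos).symm⟩
    have : n * (q - 1) + n = n * q := by subst hm; simp [Nat.mul_succ]
    rw [this, mul_comm, pow_mul, he, one_pow, Equiv.Perm.one_apply]
  have Φ_trans : ∀ {x y z : X}, y ∈ Φ x → z ∈ Φ y → z ∈ Φ x := by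
    intro x y z h1 h2
    rcases memΦ.mp h1 with ⟨n, rfl⟩
    rcases memΦ.mp h2 with ⟨m, rfl⟩
    exact memΦ.mpr ⟨m + n, by rw [pow_add, Equiv.Perm.mul_apply]⟩
  have Φ_eq : ∀ {x y : X}, y ∈ Φ x → Φ y = Φ x := by
    intro x y h
    ext z
    exact ⟨fun hz => Φ_trans h hz, fun hz => Φ_trans (Φ_symm h) hz⟩
  have FΦ : ∀ {x y : X}, y ∈ Φ x → F y = F x := by
    intro x y h
    rcases memΦ.mp h with ⟨n, rfl⟩
    exact hFn n x
  have Φ_fix : ∀ {x y : X}, y ∈ Φ x → e y = y → x = y := by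
    intro x y h hy
    rcases memΦ.mp (Φ_symm h) with ⟨n, rfl⟩
    exact hfixn hy n
  have Φ_card : ∀ {x : X}, ¬ e x = x → (Φ x).card = q := by
    intro x hx
    have hsame : ∀ a b : Fin q, (a : ℕ) ≤ (b : ℕ) → (e ^ (a : ℕ)) x = (e ^ (b : ℕ)) x → a = b := by
      intro a b hle hab
      by_contra hne
      set d : ℕ := (b : ℕ) - (a : ℕ) with hd
      have hd0 : d ≠ 0 := fun h0 => hne (Fin.ext (by omega))
      have hdq : d < q := by have := b.isLt; omega
      have hbd : (b : ℕ) = d + (a : ℕ) := by omega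
      have hy : (e ^ d) ((e ^ (a : ℕ)) x) = (e ^ (a : ℕ)) x := by
        rw [← Equiv.Perm.mul_apply, ← pow_add, ← hbd, ← hab]
      have hnd : ¬ q ∣ d := fun hdvd => absurd (Nat.le_of_dvd (Nat.pos_of_ne_zero hd0) hdvd) (by omega)
      have hey : e ((e ^ (a : ℕ)) x) = (e ^ (a : ℕ)) x := hfix_of_pow hnd hy
      have hyΦ : (e ^ (a : ℕ)) x ∈ Φ x := memΦ.mpr ⟨(a : ℕ), rfl⟩
      have := Φ_fix hyΦ hey
      rw [← this] at hey
      exact hx hey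
    have hinj : Function.Injective (fun j : Fin q => (e ^ (j : ℕ)) x) := by
      intro a b hab
      rcases le_total (a : ℕ) (b : ℕ) with hle | hle
      · exact hsame a b hle hab
      · exact (hsame b a hle hab.symm).symm
    calc (Φ x).card = Finset.univ.card := Finset.card_image_of_injective _ hinj
      _ = q := by simp
  -- main computation
  rw [Int.modEq_iff_dvd]
  have hsplit := Finset.sum_filter_add_sum_filter_not Finset.univ (fun x => e x = x) F
  have hrw : (∑ x ∈ Finset.univ.filter (fun x => e x = x), F x) - (∑ x, F x)
      = -(∑ x ∈ Finset.univ.filter (fun x => ¬ e x = x), F x) := by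
    rw [← hsplit]; ring
  rw [hrw, dvd_neg]
  set s := Finset.univ.filter (fun x => ¬ e x = x) with hs
  have hmap : ∀ x ∈ s, Φ x ∈ s.image Φ := fun x hx => Finset.mem_image_of_mem _ hx
  rw [← Finset.sum_fiberwise_of_maps_to hmap F]
  apply Finset.dvd_sum
  intro o ho
  rcases Finset.mem_image.mp ho with ⟨x₀, hx₀s, rfl⟩
  have hx₀ : ¬ e x₀ = x₀ := (Finset.mem_filter.mp hx₀s).2
  have hfiber : s.filter (fun x => Φ x = Φ x₀) = Φ x₀ := by
    ext y
    constructor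
    · intro hy
      rcases Finset.mem_filter.mp hy with ⟨-, hyo⟩
      rw [← hyo]
      exact Φ_self y
    · intro hy
      refine Finset.mem_filter.mpr ⟨Finset.mem_filter.mpr ⟨Finset.mem_univ _, ?_⟩, Φ_eq hy⟩
      intro hee
      have hxy := Φ_fix hy hee
      rw [← hxy] at hee
      exact hx₀ hee
  rw [hfiber]
  rw [Finset.sum_congr rfl (fun y hy => FΦ hy), Finset.sum_const, Φ_card hx₀, nsmul_eq_mul]
  exact dvd_mul_right _ _

lemma pow_expand {G : Type*} [Group G] [Fintype G] (v : MonoidAlgebra ℤ G) (n : ℕ) :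
    v ^ n = ∑ f : Fin n → G, MonoidAlgebra.single (List.ofFn f).prod (∏ i, v.coeff (f i)) := by
  induction n with
  | zero =>
    rw [pow_zero]
    have huniv : (Finset.univ : Finset (Fin 0 → G)) = {fun i => i.elim0} := by
      ext f
      simp only [Finset.mem_univ, Finset.mem_singleton, true_iff]
      funext i
      exact i.elim0
    rw [huniv, Finset.sum_singleton]
    simp [MonoidAlgebra.one_def]
  | succ n ih =>
    have rhs : (∑ f : Fin (n+1) → G, MonoidAlgebra.single (List.ofFn f).prod (∏ i, v.coeff (f i)))
        = ∑ p : G × (Fin n → G),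
            MonoidAlgebra.single (p.1 * (List.ofFn p.2).prod) (v.coeff p.1 * ∏ i, v.coeff (p.2 i)) := by
      rw [← Equiv.sum_comp (Fin.consEquiv (fun _ : Fin (n+1) => G))
        (fun f => MonoidAlgebra.single (List.ofFn f).prod (∏ i, v.coeff (f i)))]
      apply Finset.sum_congr rfl
      intro p _
      have h0 : (Fin.consEquiv (fun _ : Fin (n+1) => G)) p = Fin.cons p.1 p.2 := rfl
      rw [h0, List.ofFn_succ, Fin.prod_univ_succ]
      simp [Fin.cons_zero, Fin.cons_succ]
    calc v ^ (n + 1) = v * v ^ n := pow_succ' v n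
      _ = (∑ a : G, MonoidAlgebra.single a (v.coeff a)) * v ^ n := by
          exact congrArg (· * v ^ n) (by ext g; simp [Finsupp.single_apply] : ∑ a : G, MonoidAlgebra.single a (v.coeff a) = v).symm
      _ = ∑ p : G × (Fin n → G),
            MonoidAlgebra.single p.1 (v.coeff p.1)
              * MonoidAlgebra.single (List.ofFn p.2).prod (∏ i, v.coeff (p.2 i)) := by
          rw [ih, Finset.sum_mul_sum, ← Fintype.sum_prod_type']
      _ = ∑ p : G × (Fin n → G),
            MonoidAlgebra.single (p.1 * (List.ofFn p.2).prod) (v.coeff p.1 * ∏ i, v.coeff (p.2 i)) := by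
          exact Finset.sum_congr rfl fun p _ => MonoidAlgebra.single_mul_single ..
      _ = _ := rhs.symm

lemma P_conj {G : Type*} [Group G] (q : ℕ) (h x : G) :
    (∃ k : ℕ, orderOf (h * x * h⁻¹) = q ^ k) ↔ (∃ k : ℕ, orderOf x = q ^ k) := by
  have : orderOf (h * x * h⁻¹) = orderOf x := by
    have := orderOf_injective (MulAut.conj h).toMonoidHom (MulEquiv.injective _) x
    simpa [MulAut.conj_apply] using this
  rw [this]

lemma rotate_prod {G : Type*} [Group G] (l : List G) (n : ℕ) (hn : n ≤ l.length) :
    (l.rotate n).prod = (l.take n).prod⁻¹ * l.prod * (l.take n).prod := by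
  rw [List.rotate_eq_drop_append_take hn, List.prod_append,
    ← List.prod_take_mul_prod_drop l n]
  group

lemma P_pow_q {G : Type*} [Group G] [Fintype G] {q : ℕ} (hq : q.Prime) (g : G) :
    (∃ k : ℕ, orderOf (g ^ q) = q ^ k) ↔ (∃ k : ℕ, orderOf g = q ^ k) := by
  constructor
  · rintro ⟨k, hk⟩
    have hdvd : orderOf g ∣ q ^ (k + 1) := by
      apply orderOf_dvd_of_pow_eq_one
      rw [pow_succ', pow_mul, ← hk]
      exact pow_orderOf_eq_one (g ^ q)
    rcases (Nat.dvd_prime_pow hq).mp hdvd with ⟨j, -, hj⟩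
    exact ⟨j, hj⟩
  · rintro ⟨k, hk⟩
    have hdvd : orderOf (g ^ q) ∣ q ^ k := by
      rw [← hk]
      exact orderOf_pow_dvd q
    rcases (Nat.dvd_prime_pow hq).mp hdvd with ⟨j, -, hj⟩
    exact ⟨j, hj⟩

theorem stmt_14 {G : Type*} [Group G] [Fintype G] (q : ℕ) (hq : q.Prime)
    (u : MonoidAlgebra ℤ G) :
    (∑ g ∈ Finset.univ.filter (fun g : G => ∃ k : ℕ, orderOf g = q ^ k), (u ^ q).coeff g) ≡
      (∑ g ∈ Finset.univ.filter (fun g : G => ∃ k : ℕ, orderOf g = q ^ k), u.coeff g)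
        [ZMOD (q : ℤ)] := by
  haveI : Fact q.Prime := ⟨hq⟩
  haveI : NeZero q := ⟨hq.ne_zero⟩
  set P : G → Prop := fun g => ∃ k : ℕ, orderOf g = q ^ k with hP
  -- coefficient-sum of a single
  have hsingle_sum : ∀ (x : G) (c : ℤ),
      (∑ g ∈ Finset.univ.filter P, (MonoidAlgebra.single x c : MonoidAlgebra ℤ G).coeff g)
        = if P x then c else 0 := by
    intro x c
    have h1 : ∀ g ∈ Finset.univ.filter P,
        (MonoidAlgebra.single x c : MonoidAlgebra ℤ G).coeff g = if x = g then c else 0 :=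
      fun g _ => Finsupp.single_apply
    rw [Finset.sum_congr rfl h1, Finset.sum_ite_eq]
    simp
  -- expansion of LHS
  have hL : (∑ g ∈ Finset.univ.filter P, (u ^ q).coeff g)
      = ∑ f : Fin q → G, (if P ((List.ofFn f).prod) then ∏ i, u.coeff (f i) else 0) := by
    rw [pow_expand u q]
    have h2 : ∀ g ∈ Finset.univ.filter P,
        (∑ f : Fin q → G, MonoidAlgebra.single (List.ofFn f).prod (∏ i, u.coeff (f i))).coeff g
        = ∑ f : Fin q → G,
            (MonoidAlgebra.single (List.ofFn f).prod (∏ i, u.coeff (f i)) : MonoidAlgebra ℤ G).coeff g :=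
      fun g _ => by rw [MonoidAlgebra.coeff_sum, Finset.sum_apply']
    rw [Finset.sum_congr rfl h2, Finset.sum_comm]
    exact Finset.sum_congr rfl fun f _ => hsingle_sum _ _
  -- rotation permutation
  set e : Equiv.Perm (Fin q → G) := Equiv.arrowCongr (Equiv.subRight (1 : Fin q)) (Equiv.refl G)
    with he_def
  have he_apply : ∀ (f : Fin q → G) (i : Fin q), e f i = f (i + 1) := by
    intro f i
    simp [he_def, Equiv.subRight]
  have he_pow : ∀ (n : ℕ) (f : Fin q → G) (i : Fin q), (e ^ n) f i = f (i + (n : Fin q)) := by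
    intro n
    induction n with
    | zero => intro f i; simp
    | succ n ih =>
      intro f i
      rw [pow_succ, Equiv.Perm.mul_apply, ih (e f) i, he_apply]
      congr 1
      push_cast
      ring
  have he : e ^ q = 1 := by
    apply Equiv.ext
    intro f
    funext i
    rw [he_pow q f i, Fin.natCast_self, add_zero]
    rfl
  -- the weight function
  set F : (Fin q → G) → ℤ := fun f => if P ((List.ofFn f).prod) then ∏ i, u.coeff (f i) else 0
    with hF_def
  have hF : ∀ f, F (e f) = F f := by
    intro f
    have h1 : (∏ i, u.coeff (e f i)) = ∏ i, u.coeff (f i) := by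
      have h := Equiv.prod_comp (Equiv.addRight (1 : Fin q)) (fun j => u.coeff (f j))
      simp only [Equiv.coe_addRight] at h
      calc (∏ i, u.coeff (e f i)) = ∏ i, u.coeff (f (i + 1)) := by simp_rw [he_apply]
        _ = ∏ i, u.coeff (f i) := h
    have h2 : List.ofFn (e f) = (List.ofFn f).rotate 1 := by
      apply List.ext_getElem
      · simp
      · intro i hi1 hi2
        simp only [List.getElem_ofFn, List.getElem_rotate, List.length_ofFn] at *
        rw [he_apply]
        congr 1
        apply Fin.ext
        simp [Fin.add_def, Fin.val_one', Nat.mod_eq_of_lt hq.one_lt]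
    have h3 : P ((List.ofFn (e f)).prod) ↔ P ((List.ofFn f).prod) := by
      rw [h2, rotate_prod _ 1 (by simp [hq.pos, Nat.one_le_iff_ne_zero.mpr hq.ne_zero])]
      set t := (((List.ofFn f).take 1).prod : G) with ht
      have := P_conj q t⁻¹ ((List.ofFn f).prod)
      simpa using this
    simp only [hF_def]
    rw [show (∏ i, u.coeff (e f i)) = ∏ i, u.coeff (f i) from h1] at *
    by_cases hc : P ((List.ofFn f).prod)
    · rw [if_pos (h3.mpr hc), if_pos hc, h1]
    · rw [if_neg (fun hx => hc (h3.mp hx)), if_neg hc]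
  -- fixed points are constants
  have hconst_of_fix : ∀ f : Fin q → G, e f = f → f = (fun _ => f 0) := by
    intro f hf
    have hef : ∀ i, f (i + 1) = f i := by
      intro i
      conv_rhs => rw [← hf]
      rw [he_apply]
    have hconst : ∀ m : ℕ, f (m : Fin q) = f 0 := by
      intro m
      induction m with
      | zero => simp
      | succ m ih => rw [Nat.cast_add_one, hef, ih]
    funext i
    calc f i = f ((i.val : Fin q)) := by rw [Fin.cast_val_eq_self]
      _ = f 0 := hconst i.val
  have hfixed : (∑ f ∈ Finset.univ.filter (fun f => e f = f), F f) = ∑ g : G, F (fun _ => g) := by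
    apply Finset.sum_nbij' (fun f => f 0) (fun g => (fun _ => g))
    · intro f _; exact Finset.mem_univ _
    · intro g _
      refine Finset.mem_filter.mpr ⟨Finset.mem_univ _, ?_⟩
      funext i
      rw [he_apply]
    · intro f hf
      exact (hconst_of_fix f (Finset.mem_filter.mp hf).2).symm
    · intro g _; rfl
    · intro f hf
      rw [hconst_of_fix f (Finset.mem_filter.mp hf).2]
  -- value at constants
  have hconstval : ∀ g : G, F (fun _ => g) = if P (g ^ q) then (u.coeff g) ^ q else 0 := by
    intro g
    simp only [hF_def]
    congr 1
    · rw [List.ofFn_const, List.prod_replicate]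
    · rw [Finset.prod_const, Finset.card_univ, Fintype.card_fin]
  -- put it together in ZMod q
  rw [← ZMod.intCast_eq_intCast_iff]
  have key := sum_modEq_fixed hq e he F hF (Finset.univ.filter (fun f => e f = f))
    (fun f => by simp)
  calc ((∑ g ∈ Finset.univ.filter P, (u ^ q).coeff g : ℤ) : ZMod q)
      = ((∑ f : Fin q → G, F f : ℤ) : ZMod q) := by rw [hL]
    _ = ((∑ f ∈ Finset.univ.filter (fun f => e f = f), F f : ℤ) : ZMod q) :=
        (ZMod.intCast_eq_intCast_iff _ _ _).mpr key
    _ = ((∑ g : G, if P (g ^ q) then (u.coeff g) ^ q else 0 : ℤ) : ZMod q) := by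
        rw [hfixed]
        congr 1
        exact Finset.sum_congr rfl fun g _ => hconstval g
    _ = ∑ g : G, (if P g then ((u.coeff g : ℤ) : ZMod q) else 0) := by
        push_cast [apply_ite (fun z : ℤ => (z : ZMod q))]
        apply Finset.sum_congr rfl
        intro g _
        by_cases hc : P g
        · rw [if_pos ((P_pow_q hq g).mpr hc), if_pos hc]
          exact ZMod.pow_card _
        · rw [if_neg (fun hx => hc ((P_pow_q hq g).mp hx)), if_neg hc]
    _ = ((∑ g ∈ Finset.univ.filter P, u.coeff g : ℤ) : ZMod q) := by
        push_cast
        rw [Finset.sum_filter]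
end
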